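/- Let R be an n×n Hermitian positive definite matrix and B ∈ ℂ^{n×m} with rank m. Then Γ = (B* R⁻¹ B)⁻¹ B* R⁻¹ satisfies Γ B = I_m, and for every X ∈ ℂ^{m×n} with X B = I_m one has X R X* ⪰ (B* R⁻¹ B)⁻¹ in the Loewner order, with equality exactly when X = Γ. In particular the Loewner-minimal value of Γ R Γ* subject to Γ B = I_m is Ω = (B* R⁻¹ B)⁻¹, which is positive definite. -/

import Mathlib

open Matrix ComplexOrder

lemma mulVec_inj_of_rank {n m : ℕ} (B : Matrix (Fin n) (Fin m) ℂ) (hB : B.rank = m) :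
    ∀ x : Fin m → ℂ, B *ᵥ x = 0 → x = 0 := by
  intro x hx
  have hker : Module.finrank ℂ (LinearMap.ker B.mulVecLin) = 0 := by
    have h := LinearMap.finrank_range_add_finrank_ker B.mulVecLin
    simp only [Module.finrank_pi, Fintype.card_fin] at h
    have h2 : Module.finrank ℂ (LinearMap.range B.mulVecLin) = m := hB
    omega
  have : LinearMap.ker B.mulVecLin = ⊥ := Submodule.finrank_eq_zero.mp hker
  have hmem : x ∈ LinearMap.ker B.mulVecLin := hx
  rw [this] at hmem
  exact hmem

lemma posDef_conj {n m : ℕ} {M : Matrix (Fin n) (Fin n) ℂ} (hM : M.PosDef)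
    (B : Matrix (Fin n) (Fin m) ℂ) (hB : B.rank = m) : (Bᴴ * M * B).PosDef := by
  refine Matrix.PosDef.of_dotProduct_mulVec_pos ?_ ?_
  · exact isHermitian_conjTranspose_mul_mul B hM.1
  · intro x hx
    have hBx : B *ᵥ x ≠ 0 := fun h => hx (mulVec_inj_of_rank B hB x h)
    simpa only [star_mulVec, dotProduct_mulVec, vecMul_vecMul] using hM.dotProduct_mulVec_pos hBx

/-- For `R > 0` and `B` of full column rank, `Γ = (B* R⁻¹ B)⁻¹ B* R⁻¹` is the
unique Loewner minimizer of `X R X*` subject to `X B = I`, with minimal value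
`Ω = (B* R⁻¹ B)⁻¹ > 0`. -/
theorem stmt_3 {n m : ℕ} (R : Matrix (Fin n) (Fin n) ℂ) (hR : R.PosDef)
    (B : Matrix (Fin n) (Fin m) ℂ) (hB : B.rank = m) :
    ((Bᴴ * R⁻¹ * B)⁻¹ * (Bᴴ * R⁻¹)) * B = 1 ∧
    (∀ X : Matrix (Fin m) (Fin n) ℂ, X * B = 1 →
      (X * R * Xᴴ - (Bᴴ * R⁻¹ * B)⁻¹).PosSemidef ∧
      (X * R * Xᴴ = (Bᴴ * R⁻¹ * B)⁻¹ ↔ X = (Bᴴ * R⁻¹ * B)⁻¹ * (Bᴴ * R⁻¹))) ∧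
    ((Bᴴ * R⁻¹ * B)⁻¹).PosDef := by
  have hRinv : R⁻¹.PosDef := hR.inv
  set S := Bᴴ * R⁻¹ * B with hSdef
  have hS : S.PosDef := posDef_conj hRinv B hB
  have hSunit : IsUnit S.det := (Matrix.isUnit_iff_isUnit_det S).mp hS.isUnit
  have hRdet : IsUnit R.det := (Matrix.isUnit_iff_isUnit_det R).mp hR.isUnit
  have hΓB : (S⁻¹ * (Bᴴ * R⁻¹)) * B = 1 := by
    rw [Matrix.mul_assoc, ← hSdef, Matrix.nonsing_inv_mul S hSunit]
  refine ⟨hΓB, ?_, hS.inv⟩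
  intro X hX
  set Γ := S⁻¹ * (Bᴴ * R⁻¹) with hΓdef
  set Δ := X - Γ with hΔdef
  have hΔB : Δ * B = 0 := by
    rw [hΔdef, Matrix.sub_mul, hX, hΓB, sub_self]
  have hRinvH : R⁻¹ᴴ = R⁻¹ := hR.1.inv
  have hSinvH : S⁻¹ᴴ = S⁻¹ := hS.1.inv
  have hΓH : Γᴴ = R⁻¹ * B * S⁻¹ := by
    rw [hΓdef, conjTranspose_mul, conjTranspose_mul, hRinvH, hSinvH,
      conjTranspose_conjTranspose, Matrix.mul_assoc]
  have hRinvR : R⁻¹ * R = 1 := Matrix.nonsing_inv_mul R hRdet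
  have hRRinv : R * R⁻¹ = 1 := Matrix.mul_nonsing_inv R hRdet
  have hΓRΓ : Γ * R * Γᴴ = S⁻¹ := by
    rw [hΓH, hΓdef]
    calc S⁻¹ * (Bᴴ * R⁻¹) * R * (R⁻¹ * B * S⁻¹)
        = S⁻¹ * (Bᴴ * (R⁻¹ * R * R⁻¹) * B) * S⁻¹ := by
          simp only [Matrix.mul_assoc]
      _ = S⁻¹ * S * S⁻¹ := by rw [hRinvR, Matrix.one_mul, hSdef, Matrix.mul_assoc]
      _ = S⁻¹ := by rw [Matrix.nonsing_inv_mul S hSunit, Matrix.one_mul]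
  have hΔRΓ : Δ * R * Γᴴ = 0 := by
    rw [hΓH]
    calc Δ * R * (R⁻¹ * B * S⁻¹) = Δ * (R * R⁻¹) * B * S⁻¹ := by
          simp only [Matrix.mul_assoc]
      _ = 0 := by rw [hRRinv, Matrix.mul_one, hΔB, Matrix.zero_mul]
  have hΓRΔ : Γ * R * Δᴴ = 0 := by
    calc Γ * R * Δᴴ = S⁻¹ * (Bᴴ * ((R⁻¹ * R) * Δᴴ)) := by
          rw [hΓdef]; simp only [Matrix.mul_assoc]
      _ = S⁻¹ * (Δ * B)ᴴ := by
          rw [hRinvR, Matrix.one_mul, ← conjTranspose_mul]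
      _ = 0 := by rw [hΔB, conjTranspose_zero, Matrix.mul_zero]
  have hXΓΔ : X = Γ + Δ := by rw [hΔdef]; abel
  have hkey : X * R * Xᴴ = S⁻¹ + Δ * R * Δᴴ := by
    rw [hXΓΔ, conjTranspose_add]
    simp only [Matrix.add_mul, Matrix.mul_add]
    rw [hΓRΓ, hΓRΔ, hΔRΓ]
    abel
  constructor
  · rw [hkey, add_sub_cancel_left]
    exact hR.posSemidef.mul_mul_conjTranspose_same Δ
  · constructor
    · intro h
      have hΔ0 : Δ * R * Δᴴ = 0 := by
        rw [hkey] at h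
        exact add_eq_left.mp h
      -- use sqrt of R
      set sq := (open scoped MatrixOrder in CFC.sqrt R) with hsq
      have hsqH : sqᴴ = sq := by
        open scoped MatrixOrder in exact (CFC.sqrt_nonneg R).posSemidef.1
      have hsqsq : sq * sq = R := by
        open scoped MatrixOrder in exact CFC.sqrt_mul_sqrt_self R hR.posSemidef.nonneg
      have h2 : (Δ * sq) * (Δ * sq)ᴴ = 0 := by
        rw [conjTranspose_mul, hsqH, ← Matrix.mul_assoc,
          Matrix.mul_assoc Δ sq sq, hsqsq]
        exact hΔ0
      have h3 : Δ * sq = 0 := self_mul_conjTranspose_eq_zero.mp h2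
      have h4 : Δ * R = 0 := by
        rw [← hsqsq, ← Matrix.mul_assoc, h3, Matrix.zero_mul]
      have h5 : Δ = 0 := by
        have := congrArg (· * R⁻¹) h4
        simpa [Matrix.mul_assoc, hRRinv] using this
      rw [hXΓΔ, h5, add_zero, hΓdef]
    · intro h
      have hΔ0 : Δ = 0 := by rw [hΔdef, h, hΓdef, sub_self]
      rw [hkey, hΔ0, Matrix.zero_mul, Matrix.zero_mul, add_zero]
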